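/- Let σ ∈ (0,1). For every multi-index β ∈ ℕ^d with |β| ≥ 1 there is a constant C, depending only on d, σ, β, such that for all ξ, η ∈ ℝ^d, | ∂_ξ^β ( ⟨ξ+η⟩^σ − ⟨ξ⟩^σ ) | ≤ C · ⟨ξ⟩^{−|β|} · ⟨η⟩^{2|β|}. -/

import Mathlib

open MeasureTheory Real
open scoped FourierTransform ENNReal

noncomputable section

/-- `ℝ^d` as a Euclidean space. -/
abbrev E (d : ℕ) := EuclideanSpace ℝ (Fin d)

/-- The Japanese bracket `⟨ξ⟩ = (1 + |ξ|²)^{1/2}`. -/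
def jap {d : ℕ} (ξ : E d) : ℝ := Real.sqrt (1 + ‖ξ‖ ^ 2)

/-- Partial derivative in the `i`-th coordinate direction. -/
def pder {d : ℕ} {F : Type*} [NormedAddCommGroup F] [NormedSpace ℝ F]
    (i : Fin d) (f : E d → F) : E d → F :=
  fun x => fderiv ℝ f x (EuclideanSpace.single i 1)

/-- Multi-index partial derivative `∂^α`. -/
def mpder {d : ℕ} {F : Type*} [NormedAddCommGroup F] [NormedSpace ℝ F]
    (α : Fin d → ℕ) (f : E d → F) : E d → F :=
  (List.finRange d).foldr (fun i g => (pder i)^[α i] g) f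

open scoped ContDiff

namespace Stmt16Aux

variable {d : ℕ}

lemma q_pos (ξ : E d) : (0:ℝ) < 1 + ‖ξ‖ ^ 2 := by positivity

lemma jap_pos (ξ : E d) : 0 < jap ξ := Real.sqrt_pos.mpr (q_pos ξ)

lemma one_le_jap (ξ : E d) : 1 ≤ jap ξ := by
  have h : (1:ℝ) = Real.sqrt 1 := by simp
  rw [jap, h]
  exact Real.sqrt_le_sqrt (by nlinarith [sq_nonneg ‖ξ‖])

lemma norm_le_jap (ξ : E d) : ‖ξ‖ ≤ jap ξ := by
  have h : ‖ξ‖ = Real.sqrt (‖ξ‖ ^ 2) := (Real.sqrt_sq (norm_nonneg ξ)).symm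
  rw [jap, h]
  exact Real.sqrt_le_sqrt (by nlinarith [Real.sq_sqrt (sq_nonneg ‖ξ‖)])

lemma jap_rpow (ξ : E d) (s : ℝ) : jap ξ ^ s = (1 + ‖ξ‖ ^ 2) ^ (s/2) := by
  rw [jap, Real.sqrt_eq_rpow, ← Real.rpow_mul (q_pos ξ).le]
  congr 1
  ring

lemma jap_mono {x y : E d} (h : ‖x‖ ≤ ‖y‖) : jap x ≤ jap y := by
  apply Real.sqrt_le_sqrt
  nlinarith [norm_nonneg x]

lemma jap_neg (x : E d) : jap (-x) = jap x := by rw [jap, jap, norm_neg]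

lemma jap_peetre (x y : E d) : jap (x + y) ≤ Real.sqrt 2 * jap x * jap y := by
  rw [jap, jap, jap, ← Real.sqrt_mul (by norm_num : (0:ℝ) ≤ 2),
    ← Real.sqrt_mul (by positivity)]
  apply Real.sqrt_le_sqrt
  have h2 : ‖x + y‖ ^ 2 ≤ (‖x‖ + ‖y‖) ^ 2 := by
    have h1 : ‖x + y‖ ≤ ‖x‖ + ‖y‖ := norm_add_le x y
    nlinarith [norm_nonneg (x+y), norm_nonneg x, norm_nonneg y]
  nlinarith [sq_nonneg (‖x‖ - ‖y‖), sq_nonneg (‖x‖*‖y‖)]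

lemma abs_apply_le_norm (v : E d) (i : Fin d) : |v i| ≤ ‖v‖ := by
  have h : |v i| = Real.sqrt (‖v i‖ ^ 2) := by
    rw [Real.norm_eq_abs, Real.sqrt_sq_eq_abs, abs_abs]
  rw [h, EuclideanSpace.norm_eq]
  apply Real.sqrt_le_sqrt
  exact Finset.single_le_sum (f := fun j => ‖v j‖ ^ 2) (fun j _ => by positivity)
    (Finset.mem_univ i)

lemma sqrt_two_le_two : Real.sqrt 2 ≤ 2 := by
  nlinarith [Real.sq_sqrt (by norm_num : (0:ℝ) ≤ 2), Real.sqrt_nonneg 2]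

lemma one_le_sqrt_two : (1:ℝ) ≤ Real.sqrt 2 := by
  nlinarith [Real.sq_sqrt (by norm_num : (0:ℝ) ≤ 2), Real.sqrt_nonneg 2]

/-- Key bracket inequality: if `a ≤ √2 c b` with positive values and `e ≤ 0`, then
`c^e ≤ a^e (√2 b)^{-e}`. -/
lemma rpow_bracket {a b c : ℝ} (e : ℝ) (ha : 0 < a) (hb : 0 < b) (hc : 0 < c)
    (he : e ≤ 0) (h : a ≤ Real.sqrt 2 * c * b) :
    c ^ e ≤ a ^ e * (Real.sqrt 2 * b) ^ (-e) := by
  have hsb : 0 < Real.sqrt 2 * b := by positivity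
  have h2 : a / (Real.sqrt 2 * b) ≤ c := by
    rw [div_le_iff₀ hsb]
    nlinarith
  have h3 : c ^ e ≤ (a / (Real.sqrt 2 * b)) ^ e :=
    Real.rpow_le_rpow_of_nonpos (by positivity) h2 he
  refine h3.trans_eq ?_
  rw [Real.div_rpow ha.le hsb.le, Real.rpow_neg hsb.le, div_eq_mul_inv]

/-- Derivative of `ξ ↦ 1 + ‖ξ‖²`. -/
lemma hasFDerivAt_q (x : E d) :
    HasFDerivAt (fun ξ : E d => 1 + ‖ξ‖ ^ 2) ((2:ℝ) • (innerSL ℝ x)) x := by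
  have h := (hasFDerivAt_id x).norm_sq
  have h2 := h.const_add (1:ℝ)
  simp only [id_eq] at h2
  exact h2.congr_fderiv (by ext v; simp [two_smul])

lemma pder_rpow_q (i : Fin d) (r : ℝ) :
    pder i (fun ξ : E d => (1 + ‖ξ‖ ^ 2) ^ r)
      = fun ξ : E d => ξ i * ((2 * r) * (1 + ‖ξ‖ ^ 2) ^ (r - 1)) := by
  funext x
  have hq := hasFDerivAt_q x
  have hr : HasDerivAt (fun y : ℝ => y ^ r) (r * (1 + ‖x‖ ^ 2) ^ (r-1)) (1 + ‖x‖ ^ 2) :=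
    Real.hasDerivAt_rpow_const (Or.inl (q_pos x).ne')
  have h := hr.comp_hasFDerivAt x hq
  have h' : HasFDerivAt (fun ξ : E d => (1 + ‖ξ‖ ^ 2) ^ r)
      ((r * (1 + ‖x‖ ^ 2) ^ (r-1)) • ((2:ℝ) • (innerSL ℝ x))) x := h
  show fderiv ℝ _ x _ = _
  rw [h'.fderiv]
  simp only [ContinuousLinearMap.coe_smul', Pi.smul_apply, innerSL_apply_apply, smul_eq_mul]
  rw [real_inner_comm]
  rw [EuclideanSpace.inner_single_left]
  simp only [map_one, one_mul]
  ring

lemma coord_hasFDerivAt (j : Fin d) (x : E d) :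
    HasFDerivAt (fun ξ : E d => ξ j) (EuclideanSpace.proj (𝕜 := ℝ) j) x := by
  have h := (EuclideanSpace.proj (𝕜 := ℝ) j).hasFDerivAt (x := x)
  exact h

lemma pder_coord_mul (i j : Fin d) (f : E d → ℝ) (hf : Differentiable ℝ f) :
    pder i (fun ξ : E d => ξ j * f ξ)
      = fun ξ : E d => ξ j * pder i f ξ
          + (EuclideanSpace.single i (1:ℝ) : E d) j * f ξ := by
  funext x
  have h1 := coord_hasFDerivAt j x
  have h2 := (hf x).hasFDerivAt
  have h := h1.mul h2
  show fderiv ℝ _ x _ = _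
  rw [show (fun ξ : E d => ξ j * f ξ) = (fun ξ : E d => ξ j) * f from rfl, h.fderiv]
  simp only [ContinuousLinearMap.add_apply, ContinuousLinearMap.coe_smul', Pi.smul_apply,
    smul_eq_mul, PiLp.proj_apply]
  show x j * pder i f x + f x * (EuclideanSpace.single i (1:ℝ) : E d) j = _
  ring

lemma pder_add (i : Fin d) (f g : E d → ℝ) (hf : Differentiable ℝ f)
    (hg : Differentiable ℝ g) :
    pder i (fun ξ => f ξ + g ξ) = fun ξ => pder i f ξ + pder i g ξ := by
  funext x
  have h := ((hf x).hasFDerivAt.add (hg x).hasFDerivAt)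
  show fderiv ℝ _ x _ = _
  rw [show (fun ξ => f ξ + g ξ) = f + g from rfl, h.fderiv]
  rfl

lemma pder_sub (i : Fin d) (f g : E d → ℝ) (hf : Differentiable ℝ f)
    (hg : Differentiable ℝ g) :
    pder i (fun ξ => f ξ - g ξ) = fun ξ => pder i f ξ - pder i g ξ := by
  funext x
  have h := ((hf x).hasFDerivAt.sub (hg x).hasFDerivAt)
  show fderiv ℝ _ x _ = _
  rw [show (fun ξ => f ξ - g ξ) = f - g from rfl, h.fderiv]
  rfl

lemma pder_const_mul (i : Fin d) (c : ℝ) (f : E d → ℝ) (hf : Differentiable ℝ f) :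
    pder i (fun ξ => c * f ξ) = fun ξ => c * pder i f ξ := by
  funext x
  have h := (hf x).hasFDerivAt.const_mul c
  show fderiv ℝ _ x _ = _
  rw [h.fderiv]
  rfl

lemma pder_comp_add (i : Fin d) (η : E d) (f : E d → ℝ) (hf : Differentiable ℝ f) :
    pder i (fun x : E d => f (x + η)) = fun x => pder i f (x + η) := by
  funext x
  have h0 : HasFDerivAt (fun y : E d => y + η) (ContinuousLinearMap.id ℝ (E d)) x :=
    (hasFDerivAt_id x).add_const η
  have h := (hf (x + η)).hasFDerivAt.comp x h0
  have h' : HasFDerivAt (fun y : E d => f (y + η)) (fderiv ℝ f (x + η)) x := by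
    exact h.congr_fderiv (ContinuousLinearMap.comp_id _)
  show fderiv ℝ _ x _ = _
  rw [h'.fderiv]
  rfl

lemma contDiff_pder {f : E d → ℝ} (hf : ContDiff ℝ ∞ f) (i : Fin d) :
    ContDiff ℝ ∞ (pder i f) := by
  have h1 := (contDiff_infty_iff_fderiv.mp hf).2
  show ContDiff ℝ ∞ fun x => fderiv ℝ f x (EuclideanSpace.single i 1)
  exact h1.clm_apply contDiff_const

/-- Symbol class capturing functions of the form `p(ξ)·(1+‖ξ‖²)^{σ/2-k}` with
`deg p + m ≤ 2k`, closed under sums. -/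
inductive Good (σ : ℝ) {d : ℕ} : ℕ → (E d → ℝ) → Prop
  | pow (k m : ℕ) (hm : m ≤ 2 * k) :
      Good σ m (fun ξ => (1 + ‖ξ‖ ^ 2) ^ (σ / 2 - (k:ℝ)))
  | coord (i : Fin d) (m : ℕ) (f : E d → ℝ) (hf : Good σ (m + 1) f) :
      Good σ m (fun ξ => ξ i * f ξ)
  | smul (c : ℝ) (m : ℕ) (f : E d → ℝ) (hf : Good σ m f) :
      Good σ m (fun ξ => c * f ξ)
  | add (m : ℕ) (f g : E d → ℝ) (hf : Good σ m f) (hg : Good σ m g) :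
      Good σ m (fun ξ => f ξ + g ξ)

namespace Good

lemma smooth {σ : ℝ} {m : ℕ} {f : E d → ℝ} (h : Good σ m f) : ContDiff ℝ ∞ f := by
  induction h with
  | pow k m hm =>
      exact (contDiff_const.add (contDiff_norm_sq ℝ)).rpow_const_of_ne
        (fun ξ => (q_pos ξ).ne')
  | coord i m f hf ih =>
      have hc : ContDiff ℝ ∞ (fun ξ : E d => ξ i) := by
        have := (EuclideanSpace.proj (𝕜 := ℝ) i).contDiff (n := ∞)
        simpa using this
      exact hc.mul ih
  | smul c m f hf ih => exact contDiff_const.mul ih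
  | add m f g hf hg ihf ihg => exact ihf.add ihg

lemma diff {σ : ℝ} {m : ℕ} {f : E d → ℝ} (h : Good σ m f) : Differentiable ℝ f :=
  h.smooth.differentiable (by simp)

lemma pderG {σ : ℝ} {m : ℕ} {f : E d → ℝ} (h : Good σ m f) (i : Fin d) :
    Good σ (m + 1) (pder i f) := by
  induction h with
  | pow k m hm =>
      rw [pder_rpow_q]
      have he : σ / 2 - (k:ℝ) - 1 = σ / 2 - ((k+1 : ℕ):ℝ) := by push_cast; ring
      rw [he]
      exact Good.coord i (m+1) _ (Good.smul _ (m+2) _ (Good.pow (k+1) (m+2) (by omega)))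
  | coord j m f hf ih =>
      rw [pder_coord_mul i j f hf.diff]
      exact Good.add (m+1) _ _ (Good.coord j (m+1) _ (by simpa using ih))
        (Good.smul _ (m+1) _ hf)
  | smul c m f hf ih =>
      rw [pder_const_mul i c f hf.diff]
      exact Good.smul c (m+1) _ ih
  | add m f g hf hg ihf ihg =>
      rw [pder_add i f g hf.diff hg.diff]
      exact Good.add (m+1) _ _ ihf ihg

lemma bound {σ : ℝ} {m : ℕ} {f : E d → ℝ} (h : Good σ m f) :
    ∃ C : ℝ, 0 < C ∧ ∀ ξ, |f ξ| ≤ C * jap ξ ^ (σ - (m:ℝ)) := by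
  induction h with
  | pow k m hm =>
      refine ⟨1, one_pos, fun ξ => ?_⟩
      show |(1 + ‖ξ‖ ^ 2) ^ (σ / 2 - (k:ℝ))| ≤ 1 * jap ξ ^ (σ - (m:ℝ))
      have h1 : (1 + ‖ξ‖ ^ 2) ^ (σ / 2 - (k:ℝ)) = jap ξ ^ (σ - 2*(k:ℝ)) := by
        rw [jap_rpow]
        congr 1
        ring
      rw [h1, abs_of_nonneg (Real.rpow_nonneg (jap_pos ξ).le _), one_mul]
      apply Real.rpow_le_rpow_of_exponent_le (one_le_jap ξ)
      have : (m:ℝ) ≤ 2*(k:ℝ) := by exact_mod_cast hm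
      linarith
  | coord i m f hf ih =>
      obtain ⟨C, hC, hB⟩ := ih
      refine ⟨C, hC, fun ξ => ?_⟩
      have h1 : |ξ i * f ξ| = |ξ i| * |f ξ| := abs_mul _ _
      have h2 : |ξ i| ≤ jap ξ := (abs_apply_le_norm ξ i).trans (norm_le_jap ξ)
      have h3 := hB ξ
      have h4 : jap ξ ^ (σ - (m:ℝ)) = jap ξ * jap ξ ^ (σ - ((m+1:ℕ):ℝ)) := by
        push_cast
        rw [show σ - (m:ℝ) = 1 + (σ - ((m:ℝ)+1)) by ring, Real.rpow_add (jap_pos ξ),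
          Real.rpow_one]
      calc |ξ i * f ξ| = |ξ i| * |f ξ| := h1
        _ ≤ jap ξ * (C * jap ξ ^ (σ - ((m+1:ℕ):ℝ))) := by
            apply mul_le_mul h2 h3 (abs_nonneg _) (jap_pos ξ).le
        _ = C * jap ξ ^ (σ - (m:ℝ)) := by rw [h4]; ring
  | smul c m f hf ih =>
      obtain ⟨C, hC, hB⟩ := ih
      refine ⟨|c| * C + 1, by positivity, fun ξ => ?_⟩
      have h1 := hB ξ
      have hj : 0 < jap ξ ^ (σ - (m:ℝ)) := Real.rpow_pos_of_pos (jap_pos ξ) _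
      calc |c * f ξ| = |c| * |f ξ| := abs_mul _ _
        _ ≤ |c| * (C * jap ξ ^ (σ - (m:ℝ))) := by
            apply mul_le_mul_of_nonneg_left h1 (abs_nonneg c)
        _ ≤ (|c| * C + 1) * jap ξ ^ (σ - (m:ℝ)) := by nlinarith [abs_nonneg c]
  | add m f g hf hg ihf ihg =>
      obtain ⟨C1, hC1, hB1⟩ := ihf
      obtain ⟨C2, hC2, hB2⟩ := ihg
      refine ⟨C1 + C2, by positivity, fun ξ => ?_⟩
      calc |f ξ + g ξ| ≤ |f ξ| + |g ξ| := abs_add_le _ _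
        _ ≤ C1 * jap ξ ^ (σ - (m:ℝ)) + C2 * jap ξ ^ (σ - (m:ℝ)) := add_le_add (hB1 ξ) (hB2 ξ)
        _ = (C1 + C2) * jap ξ ^ (σ - (m:ℝ)) := by ring

lemma iterG {σ : ℝ} {m : ℕ} {f : E d → ℝ} (h : Good σ m f) (i : Fin d) (n : ℕ) :
    Good σ (m + n) ((pder i)^[n] f) := by
  induction n with
  | zero => simpa using h
  | succ n ih =>
      rw [Function.iterate_succ_apply']
      exact ih.pderG i

lemma foldrG {σ : ℝ} (β : Fin d → ℕ) :
    ∀ (l : List (Fin d)) (m : ℕ) (f : E d → ℝ), Good σ m f →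
      Good σ (m + (l.map β).sum) (l.foldr (fun i g => (pder i)^[β i] g) f) := by
  intro l
  induction l with
  | nil => intro m f h; simpa using h
  | cons i l ih =>
      intro m f h
      simp only [List.foldr_cons, List.map_cons, List.sum_cons]
      have h2 := (ih m f h).iterG i (β i)
      have he : m + (l.map β).sum + β i = m + (β i + (l.map β).sum) := by omega
      rw [he] at h2
      exact h2

lemma mpderG {σ : ℝ} {m : ℕ} {f : E d → ℝ} (h : Good σ m f) (β : Fin d → ℕ) :
    Good σ (m + ∑ i, β i) (mpder β f) := by
  rw [Fin.sum_univ_def]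
  exact foldrG β (List.finRange d) m f h

end Good

lemma contDiff_iter_pder {f : E d → ℝ} (hf : ContDiff ℝ ∞ f) (i : Fin d) (n : ℕ) :
    ContDiff ℝ ∞ ((pder i)^[n] f) := by
  induction n with
  | zero => simpa using hf
  | succ n ih =>
      rw [Function.iterate_succ_apply']
      exact contDiff_pder ih i

lemma contDiff_foldr {β : Fin d → ℕ} :
    ∀ (l : List (Fin d)) (f : E d → ℝ), ContDiff ℝ ∞ f →
      ContDiff ℝ ∞ (l.foldr (fun i g => (pder i)^[β i] g) f) := by
  intro l
  induction l with
  | nil => intro f h; simpa using h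
  | cons i l ih =>
      intro f h
      simp only [List.foldr_cons]
      exact contDiff_iter_pder (ih f h) i (β i)

lemma contDiff_mpder {f : E d → ℝ} (hf : ContDiff ℝ ∞ f) (β : Fin d → ℕ) :
    ContDiff ℝ ∞ (mpder β f) :=
  contDiff_foldr (List.finRange d) f hf

lemma iter_comp_add (i : Fin d) (η : E d) (n : ℕ) :
    ∀ (f : E d → ℝ), ContDiff ℝ ∞ f →
      (pder i)^[n] (fun x : E d => f (x + η)) = fun x => (pder i)^[n] f (x + η) := by
  induction n with
  | zero => intro f _; simp
  | succ n ih =>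
      intro f hf
      rw [Function.iterate_succ_apply', Function.iterate_succ_apply', ih f hf]
      exact pder_comp_add i η _
        ((contDiff_iter_pder hf i n).differentiable (by simp))

lemma foldr_comp_add (β : Fin d → ℕ) (η : E d) :
    ∀ (l : List (Fin d)) (f : E d → ℝ), ContDiff ℝ ∞ f →
      l.foldr (fun i g => (pder i)^[β i] g) (fun x : E d => f (x + η))
        = fun x => (l.foldr (fun i g => (pder i)^[β i] g) f) (x + η) := by
  intro l
  induction l with
  | nil => intro f _; rfl
  | cons i l ih =>
      intro f hf
      simp only [List.foldr_cons]
      rw [ih f hf]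
      exact iter_comp_add i η (β i) _ (contDiff_foldr l f hf)

lemma mpder_comp_add {f : E d → ℝ} (hf : ContDiff ℝ ∞ f) (β : Fin d → ℕ) (η : E d) :
    mpder β (fun x : E d => f (x + η)) = fun x => mpder β f (x + η) :=
  foldr_comp_add β η (List.finRange d) f hf

lemma iter_sub (i : Fin d) (n : ℕ) :
    ∀ (f g : E d → ℝ), ContDiff ℝ ∞ f → ContDiff ℝ ∞ g →
      (pder i)^[n] (fun x => f x - g x)
        = fun x => (pder i)^[n] f x - (pder i)^[n] g x := by
  induction n with
  | zero => intro f g _ _; simp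
  | succ n ih =>
      intro f g hf hg
      rw [Function.iterate_succ_apply', Function.iterate_succ_apply',
        Function.iterate_succ_apply', ih f g hf hg]
      exact pder_sub i _ _
        ((contDiff_iter_pder hf i n).differentiable (by simp))
        ((contDiff_iter_pder hg i n).differentiable (by simp))

lemma foldr_sub (β : Fin d → ℕ) :
    ∀ (l : List (Fin d)) (f g : E d → ℝ), ContDiff ℝ ∞ f → ContDiff ℝ ∞ g →
      l.foldr (fun i h => (pder i)^[β i] h) (fun x => f x - g x)
        = fun x => (l.foldr (fun i h => (pder i)^[β i] h) f) x
            - (l.foldr (fun i h => (pder i)^[β i] h) g) x := by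
  intro l
  induction l with
  | nil => intro f g _ _; rfl
  | cons i l ih =>
      intro f g hf hg
      simp only [List.foldr_cons]
      rw [ih f g hf hg]
      exact iter_sub i (β i) _ _ (contDiff_foldr l f hf) (contDiff_foldr l g hg)

lemma mpder_sub {f g : E d → ℝ} (hf : ContDiff ℝ ∞ f) (hg : ContDiff ℝ ∞ g)
    (β : Fin d → ℕ) :
    mpder β (fun x => f x - g x) = fun x => mpder β f x - mpder β g x :=
  foldr_sub β (List.finRange d) f g hf hg

end Stmt16Aux

open Stmt16Aux

set_option maxHeartbeats 2000000 in
/-- Derivative bounds for the phase difference: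
`|∂_ξ^β (⟨ξ+η⟩^σ − ⟨ξ⟩^σ)| ≤ C ⟨ξ⟩^{−|β|} ⟨η⟩^{2|β|}` for `|β| ≥ 1`. -/
theorem stmt_16 (σ : ℝ) (hσ0 : 0 < σ) (hσ1 : σ < 1) (d : ℕ) (β : Fin d → ℕ)
    (hβ : 1 ≤ ∑ i, β i) :
    ∃ C : ℝ, 0 < C ∧
      ∀ ξ η : E d,
        ‖mpder β (fun ξ' => jap (ξ' + η) ^ σ - jap ξ' ^ σ) ξ‖
          ≤ C * jap ξ ^ (-(∑ i, (β i : ℝ))) * jap η ^ (2 * ∑ i, (β i : ℝ)) := by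
  classical
  set m : ℕ := ∑ i, β i with hm
  have hm1 : 1 ≤ m := hβ
  have hmr : (1:ℝ) ≤ (m:ℝ) := by exact_mod_cast hm1
  set g : E d → ℝ := fun ξ => jap ξ ^ σ with hgdef
  have hgood : Good σ 0 g := by
    have h := Good.pow (σ := σ) (d := d) 0 0 (le_refl 0)
    have he : (fun ξ : E d => (1 + ‖ξ‖ ^ 2) ^ (σ / 2 - ((0:ℕ):ℝ))) = g := by
      funext ξ
      show (1 + ‖ξ‖ ^ 2) ^ (σ / 2 - ((0:ℕ):ℝ)) = jap ξ ^ σ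
      rw [jap_rpow]
      norm_num
    rwa [he] at h
  have hsm : ContDiff ℝ ∞ g := hgood.smooth
  have hGm : Good σ m (mpder β g) := by
    have h := hgood.mpderG β
    rw [← hm] at h
    simpa using h
  obtain ⟨C1, hC1, hB1⟩ := hGm.bound
  have hpd : ∀ i : Fin d, ∃ C : ℝ, 0 < C ∧
      ∀ x, |pder i (mpder β g) x| ≤ C * jap x ^ (σ - (m:ℝ) - 1) := by
    intro i
    obtain ⟨C, hC, hB⟩ := (hGm.pderG i).bound
    refine ⟨C, hC, fun x => ?_⟩
    have h := hB x
    have he : σ - ((m+1:ℕ):ℝ) = σ - (m:ℝ) - 1 := by push_cast; ring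
    rwa [he] at h
  choose Cs hCs hCsB using hpd
  set D : ℝ := ∑ i, Cs i with hD
  have hD0 : 0 ≤ D := Finset.sum_nonneg fun i _ => (hCs i).le
  have hGsm : ContDiff ℝ ∞ (mpder β g) := contDiff_mpder hsm β
  have hGdiff : Differentiable ℝ (mpder β g) :=
    hGsm.differentiable (by simp)
  have hfd : ∀ x : E d, ‖fderiv ℝ (mpder β g) x‖ ≤ D * jap x ^ (σ - (m:ℝ) - 1) := by
    intro x
    have hjx : (0:ℝ) < jap x ^ (σ - (m:ℝ) - 1) := Real.rpow_pos_of_pos (jap_pos x) _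
    apply ContinuousLinearMap.opNorm_le_bound _ (by positivity)
    intro v
    have hv : ∑ i, v i • (EuclideanSpace.single i (1:ℝ) : E d) = v := by
      have h := (EuclideanSpace.basisFun (Fin d) ℝ).sum_repr v
      simpa [EuclideanSpace.basisFun_apply, EuclideanSpace.basisFun_repr] using h
    have h1 : fderiv ℝ (mpder β g) x v = ∑ i, v i * pder i (mpder β g) x := by
      conv_lhs => rw [← hv]
      rw [map_sum]
      refine Finset.sum_congr rfl fun i _ => ?_
      rw [_root_.map_smul]
      rfl
    rw [h1]
    calc ‖∑ i, v i * pder i (mpder β g) x‖ ≤ ∑ i, ‖v i * pder i (mpder β g) x‖ :=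
          norm_sum_le _ _
      _ ≤ ∑ i, Cs i * jap x ^ (σ - (m:ℝ) - 1) * ‖v‖ := by
          refine Finset.sum_le_sum fun i _ => ?_
          rw [norm_mul]
          have h2 : ‖v i‖ ≤ ‖v‖ := by
            rw [Real.norm_eq_abs]; exact abs_apply_le_norm v i
          have h3 : ‖pder i (mpder β g) x‖ ≤ Cs i * jap x ^ (σ - (m:ℝ) - 1) := by
            rw [Real.norm_eq_abs]; exact hCsB i x
          calc ‖v i‖ * ‖pder i (mpder β g) x‖
              ≤ ‖v‖ * (Cs i * jap x ^ (σ - (m:ℝ) - 1)) :=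
                mul_le_mul h2 h3 (norm_nonneg _) (norm_nonneg _)
            _ = Cs i * jap x ^ (σ - (m:ℝ) - 1) * ‖v‖ := by ring
      _ = D * jap x ^ (σ - (m:ℝ) - 1) * ‖v‖ := by
          rw [hD, ← Finset.sum_mul, ← Finset.sum_mul]
  set Cfin : ℝ := C1 * ((2:ℝ) ^ (m:ℝ) + 1) + D * (2:ℝ) ^ ((m:ℝ) + 1) + 1 with hCfin
  have h2m : (0:ℝ) < (2:ℝ) ^ (m:ℝ) := Real.rpow_pos_of_pos two_pos _
  have h2m1 : (0:ℝ) < (2:ℝ) ^ ((m:ℝ)+1) := Real.rpow_pos_of_pos two_pos _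
  have hCfin0 : 0 < Cfin := by
    rw [hCfin]
    nlinarith [hC1, h2m, h2m1, hD0]
  refine ⟨Cfin, hCfin0, fun ξ η => ?_⟩
  have hsumr : (∑ i, (β i : ℝ)) = (m:ℝ) := by rw [hm]; push_cast; rfl
  rw [hsumr]
  have ha1 : (1:ℝ) ≤ jap ξ := one_le_jap ξ
  have hb1 : (1:ℝ) ≤ jap η := one_le_jap η
  have hap : (0:ℝ) < jap ξ := jap_pos ξ
  have hbp : (0:ℝ) < jap η := jap_pos η
  have hA0 : (0:ℝ) < jap ξ ^ (-(m:ℝ)) := Real.rpow_pos_of_pos hap _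
  have hB2m : (0:ℝ) < jap η ^ (2*(m:ℝ)) := Real.rpow_pos_of_pos hbp _
  have htr : ContDiff ℝ ∞ (fun x : E d => g (x + η)) :=
    hsm.comp (contDiff_id.add contDiff_const)
  have key0 : mpder β (fun ξ' => jap (ξ' + η) ^ σ - jap ξ' ^ σ) ξ
      = mpder β g (ξ + η) - mpder β g ξ := by
    have h1 : (fun ξ' : E d => jap (ξ' + η) ^ σ - jap ξ' ^ σ)
        = fun ξ' => (fun x => g (x + η)) ξ' - g ξ' := by
      funext ξ'
      rw [hgdef]
    rw [h1, mpder_sub htr hsm β, mpder_comp_add hsm β η]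
  rw [key0, Real.norm_eq_abs]
  rcases le_total (jap ξ) (jap η) with hab | hba
  · -- Case A : jap ξ ≤ jap η ; use triangle inequality
    have hpe : jap ξ ≤ Real.sqrt 2 * jap (ξ + η) * jap η := by
      have h := jap_peetre (ξ + η) (-η)
      rw [jap_neg] at h
      simpa using h
    have hσm : σ - (m:ℝ) ≤ 0 := by linarith
    have hbσ2m : jap η ^ σ ≤ jap η ^ (2*(m:ℝ)) :=
      Real.rpow_le_rpow_of_exponent_le hb1 (by linarith)
    have hT2 : |mpder β g ξ| ≤ C1 * (jap ξ ^ (-(m:ℝ)) * jap η ^ (2*(m:ℝ))) := by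
      calc |mpder β g ξ| ≤ C1 * jap ξ ^ (σ - (m:ℝ)) := hB1 ξ
        _ = C1 * (jap ξ ^ σ * jap ξ ^ (-(m:ℝ))) := by
            rw [show σ - (m:ℝ) = σ + -(m:ℝ) by ring, Real.rpow_add hap]
        _ ≤ C1 * (jap η ^ (2*(m:ℝ)) * jap ξ ^ (-(m:ℝ))) := by
            have h4 : jap ξ ^ σ ≤ jap η ^ (2*(m:ℝ)) :=
              (Real.rpow_le_rpow hap.le hab hσ0.le).trans hbσ2m
            have := mul_le_mul_of_nonneg_right h4 hA0.le
            nlinarith [hC1]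
        _ = C1 * (jap ξ ^ (-(m:ℝ)) * jap η ^ (2*(m:ℝ))) := by ring
    have hT1 : |mpder β g (ξ + η)|
        ≤ C1 * (2:ℝ) ^ (m:ℝ) * (jap ξ ^ (-(m:ℝ)) * jap η ^ (2*(m:ℝ))) := by
      have hbr : jap (ξ+η) ^ (σ-(m:ℝ))
          ≤ jap ξ ^ (σ-(m:ℝ)) * (Real.sqrt 2 * jap η) ^ ((m:ℝ)-σ) := by
        rw [show (m:ℝ)-σ = -(σ-(m:ℝ)) by ring]
        exact rpow_bracket _ hap hbp (jap_pos _) hσm hpe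
      have he1 : jap ξ ^ (σ-(m:ℝ)) * (Real.sqrt 2 * jap η) ^ ((m:ℝ)-σ)
          = (jap ξ ^ σ * jap ξ ^ (-(m:ℝ)))
              * (Real.sqrt 2 ^ ((m:ℝ)-σ) * jap η ^ ((m:ℝ)-σ)) := by
        rw [Real.mul_rpow (Real.sqrt_nonneg 2) hbp.le,
          show σ - (m:ℝ) = σ + -(m:ℝ) by ring, Real.rpow_add hap]
      have he2 : jap ξ ^ σ ≤ jap η ^ σ := Real.rpow_le_rpow hap.le hab hσ0.le
      have he3 : Real.sqrt 2 ^ ((m:ℝ)-σ) ≤ (2:ℝ) ^ (m:ℝ) := by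
        calc Real.sqrt 2 ^ ((m:ℝ)-σ) ≤ (2:ℝ) ^ ((m:ℝ)-σ) :=
              Real.rpow_le_rpow (Real.sqrt_nonneg 2) sqrt_two_le_two (by linarith)
          _ ≤ (2:ℝ) ^ (m:ℝ) :=
              Real.rpow_le_rpow_of_exponent_le one_le_two (by linarith)
      have he4 : jap η ^ σ * jap η ^ ((m:ℝ)-σ) = jap η ^ (m:ℝ) := by
        rw [← Real.rpow_add hbp]
        ring_nf
      have he5 : jap η ^ (m:ℝ) ≤ jap η ^ (2*(m:ℝ)) :=
        Real.rpow_le_rpow_of_exponent_le hb1 (by linarith)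
      have hb2 : (0:ℝ) ≤ jap η ^ ((m:ℝ)-σ) := (Real.rpow_pos_of_pos hbp _).le
      have hbm : (0:ℝ) ≤ jap η ^ (m:ℝ) := (Real.rpow_pos_of_pos hbp _).le
      have hchain : jap (ξ+η) ^ (σ-(m:ℝ))
          ≤ (2:ℝ) ^ (m:ℝ) * (jap ξ ^ (-(m:ℝ)) * jap η ^ (2*(m:ℝ))) := by
        calc jap (ξ+η) ^ (σ-(m:ℝ))
            ≤ jap ξ ^ (σ-(m:ℝ)) * (Real.sqrt 2 * jap η) ^ ((m:ℝ)-σ) := hbr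
          _ = (jap ξ ^ σ * jap ξ ^ (-(m:ℝ)))
                * (Real.sqrt 2 ^ ((m:ℝ)-σ) * jap η ^ ((m:ℝ)-σ)) := he1
          _ ≤ (jap η ^ σ * jap ξ ^ (-(m:ℝ)))
                * ((2:ℝ) ^ (m:ℝ) * jap η ^ ((m:ℝ)-σ)) := by
              apply mul_le_mul
              · exact mul_le_mul_of_nonneg_right he2 hA0.le
              · exact mul_le_mul_of_nonneg_right he3 hb2
              · positivity
              · positivity
          _ = (2:ℝ) ^ (m:ℝ) * (jap ξ ^ (-(m:ℝ)) * (jap η ^ σ * jap η ^ ((m:ℝ)-σ))) := by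
              ring
          _ = (2:ℝ) ^ (m:ℝ) * (jap ξ ^ (-(m:ℝ)) * jap η ^ (m:ℝ)) := by rw [he4]
          _ ≤ (2:ℝ) ^ (m:ℝ) * (jap ξ ^ (-(m:ℝ)) * jap η ^ (2*(m:ℝ))) := by
              have := mul_le_mul_of_nonneg_left he5 hA0.le
              nlinarith [h2m]
      calc |mpder β g (ξ + η)| ≤ C1 * jap (ξ+η) ^ (σ - (m:ℝ)) := hB1 (ξ+η)
        _ ≤ C1 * ((2:ℝ) ^ (m:ℝ) * (jap ξ ^ (-(m:ℝ)) * jap η ^ (2*(m:ℝ)))) :=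
            mul_le_mul_of_nonneg_left hchain hC1.le
        _ = C1 * (2:ℝ) ^ (m:ℝ) * (jap ξ ^ (-(m:ℝ)) * jap η ^ (2*(m:ℝ))) := by ring
    calc |mpder β g (ξ + η) - mpder β g ξ| ≤ |mpder β g (ξ + η)| + |mpder β g ξ| :=
          abs_sub _ _
      _ ≤ C1 * (2:ℝ) ^ (m:ℝ) * (jap ξ ^ (-(m:ℝ)) * jap η ^ (2*(m:ℝ)))
            + C1 * (jap ξ ^ (-(m:ℝ)) * jap η ^ (2*(m:ℝ))) := add_le_add hT1 hT2
      _ ≤ Cfin * jap ξ ^ (-(m:ℝ)) * jap η ^ (2*(m:ℝ)) := by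
          rw [hCfin]
          have h1 : 0 ≤ (D * (2:ℝ) ^ ((m:ℝ)+1) + 1)
              * (jap ξ ^ (-(m:ℝ)) * jap η ^ (2*(m:ℝ))) := by
            have h2 := mul_nonneg hD0 h2m1.le
            exact mul_nonneg (by linarith) (mul_pos hA0 hB2m).le
          nlinarith [h1]
  · -- Case B : jap η ≤ jap ξ ; mean value theorem on the segment
    set K : ℝ := D * ((2:ℝ) ^ ((m:ℝ)+1) * (jap ξ ^ (-(m:ℝ)) * jap η ^ (m:ℝ))) with hK
    have hbm0 : (0:ℝ) < jap η ^ (m:ℝ) := Real.rpow_pos_of_pos hbp _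
    have hKb : ∀ x ∈ segment ℝ ξ (ξ + η), ‖fderiv ℝ (mpder β g) x‖ ≤ K := by
      intro x hx
      rw [segment_eq_image'] at hx
      obtain ⟨t, ht, rfl⟩ := hx
      rw [add_sub_cancel_left]
      have hts : jap (t • η) ≤ jap η := by
        apply jap_mono
        rw [norm_smul, Real.norm_eq_abs]
        have h1 : |t| ≤ 1 := by
          rw [abs_of_nonneg ht.1]; exact ht.2
        nlinarith [norm_nonneg η]
      have hpe : jap ξ ≤ Real.sqrt 2 * jap (ξ + t • η) * jap η := by
        have h := jap_peetre (ξ + t • η) (-(t • η))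
        rw [jap_neg] at h
        have h2 : ξ + t • η + -(t • η) = ξ := by abel
        rw [h2] at h
        calc jap ξ ≤ Real.sqrt 2 * jap (ξ + t • η) * jap (t • η) := h
          _ ≤ Real.sqrt 2 * jap (ξ + t • η) * jap η := by
              apply mul_le_mul_of_nonneg_left hts
              exact mul_nonneg (Real.sqrt_nonneg 2) (jap_pos _).le
      have hσm1 : σ - (m:ℝ) - 1 ≤ 0 := by linarith
      have hbr : jap (ξ + t • η) ^ (σ-(m:ℝ)-1)
          ≤ jap ξ ^ (σ-(m:ℝ)-1) * (Real.sqrt 2 * jap η) ^ ((m:ℝ)+1-σ) := by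
        rw [show (m:ℝ)+1-σ = -(σ-(m:ℝ)-1) by ring]
        exact rpow_bracket _ hap hbp (jap_pos _) hσm1 hpe
      have he1 : jap ξ ^ (σ-(m:ℝ)-1) * (Real.sqrt 2 * jap η) ^ ((m:ℝ)+1-σ)
          = (jap ξ ^ (-(m:ℝ)) * jap ξ ^ (σ-1))
              * (Real.sqrt 2 ^ ((m:ℝ)+1-σ) * jap η ^ ((m:ℝ)+1-σ)) := by
        rw [Real.mul_rpow (Real.sqrt_nonneg 2) hbp.le,
          show σ - (m:ℝ) - 1 = -(m:ℝ) + (σ-1) by ring, Real.rpow_add hap]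
      have he2 : jap ξ ^ (σ-1) ≤ jap η ^ (σ-1) :=
        Real.rpow_le_rpow_of_nonpos hbp hba (by linarith)
      have he3 : Real.sqrt 2 ^ ((m:ℝ)+1-σ) ≤ (2:ℝ) ^ ((m:ℝ)+1) := by
        calc Real.sqrt 2 ^ ((m:ℝ)+1-σ) ≤ (2:ℝ) ^ ((m:ℝ)+1-σ) :=
              Real.rpow_le_rpow (Real.sqrt_nonneg 2) sqrt_two_le_two (by linarith)
          _ ≤ (2:ℝ) ^ ((m:ℝ)+1) :=
              Real.rpow_le_rpow_of_exponent_le one_le_two (by linarith)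
      have he4 : jap η ^ (σ-1) * jap η ^ ((m:ℝ)+1-σ) = jap η ^ (m:ℝ) := by
        rw [← Real.rpow_add hbp]
        ring_nf
      have hb2 : (0:ℝ) ≤ jap η ^ ((m:ℝ)+1-σ) := (Real.rpow_pos_of_pos hbp _).le
      have hchain : jap (ξ + t • η) ^ (σ-(m:ℝ)-1)
          ≤ (2:ℝ) ^ ((m:ℝ)+1) * (jap ξ ^ (-(m:ℝ)) * jap η ^ (m:ℝ)) := by
        calc jap (ξ + t • η) ^ (σ-(m:ℝ)-1)
            ≤ jap ξ ^ (σ-(m:ℝ)-1) * (Real.sqrt 2 * jap η) ^ ((m:ℝ)+1-σ) := hbr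
          _ = (jap ξ ^ (-(m:ℝ)) * jap ξ ^ (σ-1))
                * (Real.sqrt 2 ^ ((m:ℝ)+1-σ) * jap η ^ ((m:ℝ)+1-σ)) := he1
          _ ≤ (jap ξ ^ (-(m:ℝ)) * jap η ^ (σ-1))
                * ((2:ℝ) ^ ((m:ℝ)+1) * jap η ^ ((m:ℝ)+1-σ)) := by
              apply mul_le_mul
              · exact mul_le_mul_of_nonneg_left he2 hA0.le
              · exact mul_le_mul_of_nonneg_right he3 hb2
              · positivity
              · positivity
          _ = (2:ℝ) ^ ((m:ℝ)+1)
                * (jap ξ ^ (-(m:ℝ)) * (jap η ^ (σ-1) * jap η ^ ((m:ℝ)+1-σ))) := by ring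
          _ = (2:ℝ) ^ ((m:ℝ)+1) * (jap ξ ^ (-(m:ℝ)) * jap η ^ (m:ℝ)) := by rw [he4]
      calc ‖fderiv ℝ (mpder β g) (ξ + t • η)‖
          ≤ D * jap (ξ + t • η) ^ (σ - (m:ℝ) - 1) := hfd _
        _ ≤ D * ((2:ℝ) ^ ((m:ℝ)+1) * (jap ξ ^ (-(m:ℝ)) * jap η ^ (m:ℝ))) :=
            mul_le_mul_of_nonneg_left hchain hD0
        _ = K := by rw [hK]
    have hmvt : ‖mpder β g (ξ + η) - mpder β g ξ‖ ≤ K * ‖(ξ + η) - ξ‖ :=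
      Convex.norm_image_sub_le_of_norm_fderiv_le (fun x _ => hGdiff x) hKb
        (convex_segment _ _) (left_mem_segment ℝ ξ (ξ + η)) (right_mem_segment ℝ ξ (ξ + η))
    have hnorm : ‖(ξ + η) - ξ‖ = ‖η‖ := by rw [add_sub_cancel_left]
    have hbb : jap η ^ (m:ℝ) * jap η ≤ jap η ^ (2*(m:ℝ)) := by
      have h1 : jap η ^ (m:ℝ) * jap η = jap η ^ ((m:ℝ)+1) := by
        rw [Real.rpow_add hbp, Real.rpow_one]
      rw [h1]
      exact Real.rpow_le_rpow_of_exponent_le hb1 (by linarith)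
    have hKnn : 0 ≤ K := by rw [hK]; positivity
    calc |mpder β g (ξ + η) - mpder β g ξ|
        ≤ K * ‖η‖ := by rw [← hnorm]; exact_mod_cast hmvt
      _ ≤ K * jap η := mul_le_mul_of_nonneg_left (norm_le_jap η) hKnn
      _ = D * (2:ℝ) ^ ((m:ℝ)+1) * jap ξ ^ (-(m:ℝ)) * (jap η ^ (m:ℝ) * jap η) := by
          rw [hK]; ring
      _ ≤ D * (2:ℝ) ^ ((m:ℝ)+1) * jap ξ ^ (-(m:ℝ)) * jap η ^ (2*(m:ℝ)) := by
          apply mul_le_mul_of_nonneg_left hbb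
          positivity
      _ ≤ Cfin * jap ξ ^ (-(m:ℝ)) * jap η ^ (2*(m:ℝ)) := by
          rw [hCfin]
          have h1 : 0 ≤ (C1 * ((2:ℝ) ^ (m:ℝ) + 1) + 1)
              * (jap ξ ^ (-(m:ℝ)) * jap η ^ (2*(m:ℝ))) := by
            have h2 := mul_pos hC1 (by linarith : (0:ℝ) < (2:ℝ) ^ (m:ℝ) + 1)
            exact mul_nonneg (by linarith) (mul_pos hA0 hB2m).le
          nlinarith [h1]
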